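/- arXiv:2503.03064 — 2 statements merged into one kernel-verified Lean document; each statement's English description precedes it below -/
import Mathlib

section
/- Fix distinct real numbers k ≠ k'. For ε ∈ [0,1] let X1(ε) be the two-point distribution (1-ε)δ_k + εδ_{k'} and let X2 = δ_k be deterministic. Then MEAN(X1(ε), X2) = sgn(k'-k) · ε / (ε + sqrt(ε(1-ε))) for ε ∈ (0,1), and MEAN(X1(ε), X2) → 0 = MEAN(X1(0), X2) as ε → 0+, i.e., MEAN is continuous at ε = 0. -/
open MeasureTheory Filter

noncomputable def twoPoint (k k' ε : ℝ) : Measure ℝ :=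
  ENNReal.ofReal (1 - ε) • Measure.dirac k + ENNReal.ofReal ε • Measure.dirac k'

noncomputable def meanCmpDirac (c : ℝ) (ν : Measure ℝ) : ℝ :=
  (∫ x, (x - c) ∂ν) /
    ((∫ x, |x - c| ∂ν) + Real.sqrt (∫ x, (x - c - ∫ y, (y - c) ∂ν)^2 ∂ν))

lemma integrable_dirac' (f : ℝ → ℝ) (a : ℝ) : Integrable f (Measure.dirac a) := by
  refine (integrable_const (f a)).congr ?_
  rw [MeasureTheory.ae_dirac_eq]
  exact Filter.eventually_pure.2 rfl

lemma integral_twoPoint (k k' : ℝ) {ε : ℝ} (h0 : 0 ≤ ε) (h1 : ε ≤ 1) (f : ℝ → ℝ) :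
    ∫ x, f x ∂(twoPoint k k' ε) = (1 - ε) * f k + ε * f k' := by
  unfold twoPoint
  rw [integral_add_measure
      ((integrable_dirac' f k).smul_measure ENNReal.ofReal_ne_top)
      ((integrable_dirac' f k').smul_measure ENNReal.ofReal_ne_top),
    integral_smul_measure, integral_smul_measure, integral_dirac, integral_dirac,
    ENNReal.toReal_ofReal (by linarith), ENNReal.toReal_ofReal h0]
  simp [smul_eq_mul]

lemma meanCmp_formula (k k' : ℝ) (hkk : k ≠ k') {ε : ℝ} (h0 : 0 < ε) (h1 : ε < 1) :
    meanCmpDirac k (twoPoint k k' ε) =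
      Real.sign (k' - k) * ε / (ε + Real.sqrt (ε * (1 - ε))) := by
  set d := k' - k with hd
  have hd0 : d ≠ 0 := sub_ne_zero.2 (Ne.symm hkk)
  have hI1 : ∫ x, (x - k) ∂(twoPoint k k' ε) = ε * d := by
    rw [integral_twoPoint k k' h0.le h1.le]; ring
  have hI2 : ∫ x, |x - k| ∂(twoPoint k k' ε) = ε * |d| := by
    rw [integral_twoPoint k k' h0.le h1.le]; simp
    exact Or.inl rfl
  have hI3 : ∫ x, (x - k - ε * d)^2 ∂(twoPoint k k' ε)
      = d^2 * (ε * (1 - ε)) := by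
    rw [integral_twoPoint k k' h0.le h1.le]; ring
  have hsq : Real.sqrt (d^2 * (ε * (1 - ε))) = |d| * Real.sqrt (ε * (1 - ε)) := by
    rw [Real.sqrt_mul (sq_nonneg d), Real.sqrt_sq_eq_abs]
  have hden : 0 < ε + Real.sqrt (ε * (1 - ε)) :=
    lt_of_lt_of_le h0 (le_add_of_nonneg_right (Real.sqrt_nonneg _))
  unfold meanCmpDirac
  rw [hI1, hI2, hI3, hsq]
  have hden1 : 0 < ε * |d| + |d| * Real.sqrt (ε * (1 - ε)) := by
    have : 0 < |d| := abs_pos.2 hd0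
    have : ε * |d| + |d| * Real.sqrt (ε * (1 - ε)) = |d| * (ε + Real.sqrt (ε * (1 - ε))) := by
      ring
    rw [this]; positivity
  rcases lt_or_gt_of_ne hd0 with h | h
  · rw [Real.sign_of_neg h, div_eq_div_iff hden1.ne' hden.ne', abs_of_neg h]
    ring
  · rw [Real.sign_of_pos h, div_eq_div_iff hden1.ne' hden.ne', abs_of_pos h]
    ring

/-- for `X1(ε) ~ (1-ε)δ_k + εδ_{k'}` (`k ≠ k'`) and `X2 = δ_k`,
`MEAN(X1(ε), X2) = sgn(k'-k) · ε / (ε + √(ε(1-ε)))` on `ε ∈ (0,1)`,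
`MEAN(X1(0), X2) = 0`, and `MEAN(X1(ε), X2) → 0` as `ε → 0⁺`;
i.e. `MEAN` is continuous at `ε = 0`. -/
theorem meanCmp_twoPoint (k k' : ℝ) (hkk : k ≠ k') :
    (∀ ε ∈ Set.Ioo (0 : ℝ) 1,
        meanCmpDirac k (twoPoint k k' ε) =
          Real.sign (k' - k) * ε / (ε + Real.sqrt (ε * (1 - ε)))) ∧
    meanCmpDirac k (twoPoint k k' 0) = 0 ∧
    Tendsto (fun ε => meanCmpDirac k (twoPoint k k' ε))
      (nhdsWithin 0 (Set.Ioi 0)) (nhds 0) := by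
  refine ⟨fun ε hε => meanCmp_formula k k' hkk hε.1 hε.2, ?_, ?_⟩
  · have hI1 : ∫ x, (x - k) ∂(twoPoint k k' 0) = 0 := by
      rw [integral_twoPoint k k' le_rfl zero_le_one]; ring
    unfold meanCmpDirac
    rw [hI1, zero_div]
  · -- limit
    have hev : ∀ᶠ ε in nhdsWithin (0:ℝ) (Set.Ioi 0),
        meanCmpDirac k (twoPoint k k' ε)
          = Real.sign (k' - k) * Real.sqrt ε / (Real.sqrt ε + Real.sqrt (1 - ε)) := by
      filter_upwards [Ioo_mem_nhdsGT_of_mem (by norm_num : (0:ℝ) ∈ Set.Ico 0 1)]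
        with ε hε
      rw [meanCmp_formula k k' hkk hε.1 hε.2]
      have hε0 : (0:ℝ) < ε := hε.1
      have hs : Real.sqrt (ε * (1 - ε)) = Real.sqrt ε * Real.sqrt (1 - ε) :=
        Real.sqrt_mul hε0.le _
      have hsε : (0:ℝ) < Real.sqrt ε := Real.sqrt_pos.2 hε0
      have hd1 : (0:ℝ) < ε + Real.sqrt ε * Real.sqrt (1 - ε) := by positivity
      have hd2 : (0:ℝ) < Real.sqrt ε + Real.sqrt (1 - ε) := by positivity
      rw [hs, div_eq_div_iff hd1.ne' hd2.ne']
      linear_combination (-Real.sign (k' - k) * Real.sqrt (1 - ε)) *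
        (Real.mul_self_sqrt hε0.le)
    have hlim : Tendsto (fun ε : ℝ =>
        Real.sign (k' - k) * Real.sqrt ε / (Real.sqrt ε + Real.sqrt (1 - ε)))
        (nhds 0) (nhds 0) := by
      have h1 : Tendsto (fun ε : ℝ => Real.sign (k' - k) * Real.sqrt ε) (nhds 0)
          (nhds (Real.sign (k' - k) * Real.sqrt 0)) :=
        (tendsto_const_nhds.mul (Real.continuous_sqrt.tendsto 0))
      have h2 : Tendsto (fun ε : ℝ => Real.sqrt ε + Real.sqrt (1 - ε)) (nhds 0)
          (nhds (Real.sqrt 0 + Real.sqrt (1 - 0))) :=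
        (Real.continuous_sqrt.tendsto 0).add
          ((Real.continuous_sqrt.comp (continuous_const.sub continuous_id)).tendsto 0)
      have := h1.div h2 (by norm_num)
      rw [Real.sqrt_zero, mul_zero, zero_div] at this
      exact this
    exact Tendsto.congr' (Filter.EventuallyEq.symm hev) (hlim.mono_left nhdsWithin_le_nhds)
end

section
/- Let X1, X2 be random variables on {1, ..., K} that are comonotone, i.e., X1 = Q_{X1}(U) and X2 = Q_{X2}(U) for a single uniform random variable U on (0,1). Then P(X1 > X2) - P(X1 < X2) = ∫_0^1 sgn(Q_{X1}(p) - Q_{X2}(p)) dp, i.e., PS computed under the comonotone coupling equals QT. -/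
open MeasureTheory

/-- The `p`-quantile of a probability measure `ν` on `ℝ`:
`Q_ν(p) = inf {t | ν(-∞, t] ≥ p}`. -/
noncomputable def mQuantile (ν : Measure ℝ) (p : ℝ) : ℝ :=
  sInf {t : ℝ | p ≤ (ν (Set.Iic t)).toReal}

lemma mQuantile_min_mono (K : ℕ) (hK : 0 < K) (ν : Measure ℝ) [IsProbabilityMeasure ν]
    (hs : ν ((fun n : ℕ => (n : ℝ)) '' Set.Icc 1 K)ᶜ = 0) :
    Monotone (fun p => mQuantile ν (min p 1)) := by
  have hzero : ∀ t : ℝ, t < 1 → ν (Set.Iic t) = 0 := by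
    intro t ht
    refine measure_mono_null ?_ hs
    intro x hx hmem
    obtain ⟨n, hn, rfl⟩ := hmem
    have : (1:ℝ) ≤ (n:ℝ) := by exact_mod_cast hn.1
    exact absurd (le_trans this hx) (not_le.2 ht)
  have hone : ν (Set.Iic (K:ℝ)) = 1 := by
    have hc : ν (Set.Iic (K:ℝ))ᶜ = 0 := by
      refine measure_mono_null ?_ hs
      intro x hx hmem
      obtain ⟨n, hn, rfl⟩ := hmem
      exact hx (by exact_mod_cast hn.2 : (n:ℝ) ≤ (K:ℝ))
    have := measure_union_le (μ := ν) (Set.Iic (K:ℝ)) (Set.Iic (K:ℝ))ᶜ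
    rw [Set.union_compl_self, hc, add_zero] at this
    exact le_antisymm prob_le_one (by simpa using this)
  have hsub : ∀ p : ℝ, 0 < p → {t : ℝ | p ≤ (ν (Set.Iic t)).toReal} ⊆ Set.Ici (1:ℝ) := by
    intro p hp t ht
    by_contra h
    rw [Set.mem_setOf_eq, hzero t (not_le.1 h)] at ht
    simp only [ENNReal.toReal_zero] at ht
    linarith
  have hne : ∀ p : ℝ, p ≤ 1 → ((K:ℝ)) ∈ {t : ℝ | p ≤ (ν (Set.Iic t)).toReal} := by
    intro p hp
    simp [Set.mem_setOf_eq, hone, hp]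
  intro p q hpq
  simp only
  set p' := min p 1 with hp'
  set q' := min q 1 with hq'
  have hpq' : p' ≤ q' := min_le_min hpq le_rfl
  have hq1 : q' ≤ 1 := min_le_right _ _
  have hp1 : p' ≤ 1 := min_le_right _ _
  by_cases hp0 : 0 < p'
  · exact csInf_le_csInf ⟨1, hsub p' hp0⟩ ⟨(K:ℝ), hne q' hq1⟩
      (fun t ht => le_trans hpq' ht)
  · push_neg at hp0
    have hPuniv : {t : ℝ | p' ≤ (ν (Set.Iic t)).toReal} = Set.univ := by
      ext t; simp only [Set.mem_setOf_eq, Set.mem_univ, iff_true]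
      exact le_trans hp0 ENNReal.toReal_nonneg
    rw [show mQuantile ν p' = sInf {t : ℝ | p' ≤ (ν (Set.Iic t)).toReal} from rfl, hPuniv]
    have huniv0 : sInf (Set.univ : Set ℝ) = 0 :=
      Real.sInf_of_not_bddBelow (by simp [BddBelow, Set.Nonempty])
    rw [huniv0]
    by_cases hq0 : 0 < q'
    · exact Real.sInf_nonneg (fun x hx => le_trans zero_le_one (hsub q' hq0 hx))
    · push_neg at hq0
      have hQuniv : {t : ℝ | q' ≤ (ν (Set.Iic t)).toReal} = Set.univ := by
        ext t; simp only [Set.mem_setOf_eq, Set.mem_univ, iff_true]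
        exact le_trans hq0 ENNReal.toReal_nonneg
      rw [show mQuantile ν q' = sInf {t : ℝ | q' ≤ (ν (Set.Iic t)).toReal} from rfl, hQuniv, huniv0]

/-- if `ν1, ν2` are probability measures on `{1, …, K}` and
`X1 = Q_{ν1}(U)`, `X2 = Q_{ν2}(U)` are the comonotone coupling obtained from a
single uniform variable `U` on `(0,1)`, then the probability of superiority of
`X1` over `X2` equals the quantile comparison:
`P(X1 > X2) - P(X1 < X2) = ∫_0^1 sgn(Q_{ν1}(p) - Q_{ν2}(p)) dp`. -/
theorem ps_comonotone_eq_qt {Ω : Type*} [MeasurableSpace Ω]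
    (μ : Measure Ω) [IsProbabilityMeasure μ]
    (U : Ω → ℝ) (hU : Measurable U)
    (hUlaw : μ.map U = volume.restrict (Set.Ioo (0:ℝ) 1))
    (K : ℕ) (hK : 0 < K) (ν1 ν2 : Measure ℝ)
    [IsProbabilityMeasure ν1] [IsProbabilityMeasure ν2]
    (hs1 : ν1 ((fun n : ℕ => (n : ℝ)) '' Set.Icc 1 K)ᶜ = 0)
    (hs2 : ν2 ((fun n : ℕ => (n : ℝ)) '' Set.Icc 1 K)ᶜ = 0)
    (X1 X2 : Ω → ℝ)
    (hX1 : X1 = fun ω => mQuantile ν1 (U ω))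
    (hX2 : X2 = fun ω => mQuantile ν2 (U ω)) :
    (μ {ω | X2 ω < X1 ω}).toReal - (μ {ω | X1 ω < X2 ω}).toReal =
      ∫ p in Set.Ioo (0:ℝ) 1, Real.sign (mQuantile ν1 p - mQuantile ν2 p) := by
  classical
  set Q1 : ℝ → ℝ := fun p => mQuantile ν1 (min p 1) with hQ1
  set Q2 : ℝ → ℝ := fun p => mQuantile ν2 (min p 1) with hQ2
  have hm1 : Measurable Q1 := (mQuantile_min_mono K hK ν1 hs1).measurable
  have hm2 : Measurable Q2 := (mQuantile_min_mono K hK ν2 hs2).measurable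
  set A : Set ℝ := {p | Q2 p < Q1 p} with hA
  set B : Set ℝ := {p | Q1 p < Q2 p} with hB
  have hAmeas : MeasurableSet A := measurableSet_lt hm2 hm1
  have hBmeas : MeasurableSet B := measurableSet_lt hm1 hm2
  -- U lands in (0,1) a.s.
  have hUIoo : μ (U ⁻¹' Set.Ioo (0:ℝ) 1) = 1 := by
    rw [← Measure.map_apply hU measurableSet_Ioo, hUlaw,
      Measure.restrict_apply measurableSet_Ioo, Set.inter_self, Real.volume_Ioo]
    norm_num
  have hUc : μ (U ⁻¹' Set.Ioo (0:ℝ) 1)ᶜ = 0 := by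
    have hcompl := measure_compl (s := U ⁻¹' Set.Ioo (0:ℝ) 1)
      (hU measurableSet_Ioo) (measure_ne_top μ _)
    rw [hUIoo, measure_univ] at hcompl
    simpa using hcompl
  -- transfer of measure
  have key : ∀ T : Set ℝ, MeasurableSet T →
      μ (U ⁻¹' (T ∩ Set.Ioo 0 1)) = volume (T ∩ Set.Ioo 0 1) := by
    intro T hT
    rw [← Measure.map_apply hU (hT.inter measurableSet_Ioo), hUlaw,
      Measure.restrict_apply (hT.inter measurableSet_Ioo), Set.inter_assoc,
      Set.inter_self]
  -- rewrite event sets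
  have hQeq1 : ∀ {p : ℝ}, p ∈ Set.Ioo (0:ℝ) 1 → Q1 p = mQuantile ν1 p := by
    intro p hp; simp [hQ1, min_eq_left (le_of_lt hp.2)]
  have hQeq2 : ∀ {p : ℝ}, p ∈ Set.Ioo (0:ℝ) 1 → Q2 p = mQuantile ν2 p := by
    intro p hp; simp [hQ2, min_eq_left (le_of_lt hp.2)]
  have hset1 : {ω | X2 ω < X1 ω} ∩ (U ⁻¹' Set.Ioo (0:ℝ) 1)
      = U ⁻¹' (A ∩ Set.Ioo (0:ℝ) 1) := by
    ext ω
    constructor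
    · rintro ⟨h1, h2⟩
      refine ⟨?_, h2⟩
      show Q2 (U ω) < Q1 (U ω)
      rw [hQeq1 h2, hQeq2 h2]
      simpa [hX1, hX2] using h1
    · rintro ⟨h1, h2⟩
      refine ⟨?_, h2⟩
      have h1' : Q2 (U ω) < Q1 (U ω) := h1
      rw [hQeq1 h2, hQeq2 h2] at h1'
      show X2 ω < X1 ω
      simpa [hX1, hX2] using h1'
  have hset2 : {ω | X1 ω < X2 ω} ∩ (U ⁻¹' Set.Ioo (0:ℝ) 1)
      = U ⁻¹' (B ∩ Set.Ioo (0:ℝ) 1) := by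
    ext ω
    constructor
    · rintro ⟨h1, h2⟩
      refine ⟨?_, h2⟩
      show Q1 (U ω) < Q2 (U ω)
      rw [hQeq1 h2, hQeq2 h2]
      simpa [hX1, hX2] using h1
    · rintro ⟨h1, h2⟩
      refine ⟨?_, h2⟩
      have h1' : Q1 (U ω) < Q2 (U ω) := h1
      rw [hQeq1 h2, hQeq2 h2] at h1'
      show X1 ω < X2 ω
      simpa [hX1, hX2] using h1'
  have hμ1 : μ {ω | X2 ω < X1 ω} = volume (A ∩ Set.Ioo 0 1) := by
    rw [← measure_inter_conull hUc, hset1, key A hAmeas]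
  have hμ2 : μ {ω | X1 ω < X2 ω} = volume (B ∩ Set.Ioo 0 1) := by
    rw [← measure_inter_conull hUc, hset2, key B hBmeas]
  -- integral of sign
  have hsign : ∀ p ∈ Set.Ioo (0:ℝ) 1,
      Real.sign (mQuantile ν1 p - mQuantile ν2 p)
        = A.indicator (fun _ => (1:ℝ)) p - B.indicator (fun _ => (1:ℝ)) p := by
    intro p hp
    have hmin : min p 1 = p := min_eq_left (le_of_lt hp.2)
    have hq1 : Q1 p = mQuantile ν1 p := by rw [hQ1]; simp [hmin]
    have hq2 : Q2 p = mQuantile ν2 p := by rw [hQ2]; simp [hmin]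
    rcases lt_trichotomy (mQuantile ν1 p) (mQuantile ν2 p) with h | h | h
    · have hA' : p ∉ A := by simp [hA, hq1, hq2, not_lt.2 (le_of_lt h)]
      have hB' : p ∈ B := by simp [hB, hq1, hq2, h]
      rw [Set.indicator_of_notMem hA', Set.indicator_of_mem hB']
      rw [Real.sign_of_neg (by linarith)]
      ring
    · have hA' : p ∉ A := by simp [hA, hq1, hq2, h]
      have hB' : p ∉ B := by simp [hB, hq1, hq2, h]
      rw [Set.indicator_of_notMem hA', Set.indicator_of_notMem hB']
      rw [h, sub_self, Real.sign_zero]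
      ring
    · have hA' : p ∈ A := by simp [hA, hq1, hq2, h]
      have hB' : p ∉ B := by simp [hB, hq1, hq2, not_lt.2 (le_of_lt h)]
      rw [Set.indicator_of_mem hA', Set.indicator_of_notMem hB']
      rw [Real.sign_of_pos (by linarith)]
      ring
  have hfin : ∀ S : Set ℝ, volume.restrict (Set.Ioo (0:ℝ) 1) S < ⊤ := by
    intro S
    calc volume.restrict (Set.Ioo (0:ℝ) 1) S ≤ volume.restrict (Set.Ioo (0:ℝ) 1) Set.univ :=
          measure_mono (Set.subset_univ _)
      _ = volume (Set.Ioo (0:ℝ) 1) := by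
          rw [Measure.restrict_apply MeasurableSet.univ, Set.univ_inter]
      _ < ⊤ := by rw [Real.volume_Ioo]; norm_num
  have hintA : Integrable (A.indicator (fun _ => (1:ℝ)))
      (volume.restrict (Set.Ioo (0:ℝ) 1)) := by
    rw [integrable_indicator_iff hAmeas]
    exact integrableOn_const (hfin _).ne
  have hintB : Integrable (B.indicator (fun _ => (1:ℝ)))
      (volume.restrict (Set.Ioo (0:ℝ) 1)) := by
    rw [integrable_indicator_iff hBmeas]
    exact integrableOn_const (hfin _).ne
  rw [setIntegral_congr_fun measurableSet_Ioo hsign]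
  rw [integral_sub hintA hintB]
  rw [setIntegral_indicator hAmeas, setIntegral_indicator hBmeas,
    setIntegral_const, setIntegral_const]
  rw [hμ1, hμ2, Set.inter_comm A, Set.inter_comm B]
  simp [Measure.real]
end
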